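/- An order-k de Bruijn graph, with its nodes ordered by the colexicographic order of their associated k-mers (i.e., lexicographic order of the reversed k-mers, with the node $^k consisting of k sentinel symbols first), is a Wheeler graph. -/

import Mathlib

private lemma rep_lex {A : Type} [LinearOrder A] (dollar : A)
    (hdollar : ∀ a : A, a ≠ dollar → dollar < a) :
    ∀ (l : List A) (k : ℕ), l.length = k → l ≠ List.replicate k dollar →
      List.Lex (· < ·) (List.replicate k dollar) l := by
  intro l
  induction l with
  | nil => intro k h hne; simp at h; subst h; simp at hne
  | cons a t ih =>
      intro k h hne
      cases k with
      | zero => simp at h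
      | succ n =>
          simp only [List.replicate_succ]
          by_cases ha : a = dollar
          · have ht : t ≠ List.replicate n dollar := by
              intro h'; apply hne; rw [List.replicate_succ, ← h', ha]
            rw [ha]
            exact List.Lex.cons (ih n (by simpa using h) ht)
          · exact List.Lex.rel (hdollar a ha)

private lemma lex_append_single {A : Type} [LinearOrder A] :
    ∀ (a b : List A) (x y : A), a.length = b.length →
      List.Lex (· < ·) (a ++ [x]) (b ++ [y]) →
      List.Lex (· < ·) a b ∨ a = b := by
  intro a
  induction a with
  | nil =>
      intro b x y hlen _
      right
      exact (List.length_eq_zero_iff.mp hlen.symm).symm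
  | cons p a' ih =>
      intro b x y hlen hlex
      cases b with
      | nil => simp at hlen
      | cons q b' =>
          simp only [List.cons_append] at hlex
          cases hlex with
          | rel h => exact Or.inl (List.Lex.rel h)
          | cons h =>
              rcases ih b' x y (by simpa using hlen) h with h' | h'
              · exact Or.inl (List.Lex.cons h')
              · exact Or.inr (by rw [h'])

/-- An order-k de Bruijn graph (nodes: k-mers, edge `(u,v)` labeled `c` when
`v = u[2..k]·c`; every node without incoming edges is the sentinel node `$^k`,
`$` being strictly smaller than every other symbol), ordered by the
lexicographic order of the reversed k-mers, is a Wheeler graph. -/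
theorem stmt_2 {A : Type} [LinearOrder A] (k : ℕ) (dollar : A)
    (hdollar : ∀ a : A, a ≠ dollar → dollar < a)
    (nodes : Set (List A))
    (hlen : ∀ v ∈ nodes, v.length = k)
    (E : List A → List A → A → Prop)
    (hE : ∀ u v c, E u v c → u ∈ nodes ∧ v ∈ nodes ∧ v = u.tail ++ [c])
    (hsrc : ∀ v ∈ nodes, (∀ u c, ¬ E u v c) → v = List.replicate k dollar) :
    (∀ v ∈ nodes, ∀ w ∈ nodes, (∀ u c, ¬ E u v c) → (∃ u c, E u w c) →
        List.Lex (· < ·) v.reverse w.reverse) ∧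
    (∀ u v c u' v' c', E u v c → E u' v' c' →
      (c < c' → List.Lex (· < ·) v.reverse v'.reverse) ∧
      (c = c' → List.Lex (· < ·) u.reverse u'.reverse →
        List.Lex (· < ·) v.reverse v'.reverse ∨ v = v')) := by
  constructor
  · intro v hv w hw hnov ⟨u, c, huw⟩
    have hveq : v = List.replicate k dollar := hsrc v hv hnov
    have hwne : w ≠ List.replicate k dollar := by
      intro h
      apply hnov u c
      rw [h, ← hveq] at huw
      exact huw
    have hwr : w.reverse ≠ List.replicate k dollar := by
      intro h
      apply hwne
      have := congrArg List.reverse h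
      simpa [List.reverse_replicate] using this
    have := rep_lex dollar hdollar w.reverse k (by simpa using hlen w hw) hwr
    rw [hveq, List.reverse_replicate]
    exact this
  · intro u v c u' v' c' h h'
    obtain ⟨hu, hv, hveq⟩ := hE u v c h
    obtain ⟨hu', hv', hveq'⟩ := hE u' v' c' h'
    have hvr : v.reverse = c :: u.tail.reverse := by rw [hveq]; simp
    have hvr' : v'.reverse = c' :: u'.tail.reverse := by rw [hveq']; simp
    constructor
    · intro hcc
      rw [hvr, hvr']
      exact List.Lex.rel hcc
    · intro hcc hlex
      subst hcc
      -- u and u' are nonempty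
      have hk : 0 < k := by
        have h1 := hlen v hv
        rw [hveq] at h1
        simp at h1
        omega
      have hune : u ≠ [] := by
        intro h0; have := hlen u hu; rw [h0] at this; simp at this; omega
      have hune' : u' ≠ [] := by
        intro h0; have := hlen u' hu'; rw [h0] at this; simp at this; omega
      have hud : u = u.head hune :: u.tail := (List.cons_head_tail hune).symm
      have hud' : u' = u'.head hune' :: u'.tail := (List.cons_head_tail hune').symm
      have hur : u.reverse = u.tail.reverse ++ [u.head hune] := by
        conv_lhs => rw [hud]
        simp
      have hur' : u'.reverse = u'.tail.reverse ++ [u'.head hune'] := by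
        conv_lhs => rw [hud']
        simp
      rw [hur, hur'] at hlex
      have hlt : u.tail.reverse.length = u'.tail.reverse.length := by
        have h1 := hlen u hu
        have h2 := hlen u' hu'
        simp [List.length_tail, h1, h2]
      rcases lex_append_single _ _ _ _ hlt hlex with hl | hl
      · left; rw [hvr, hvr']; exact List.Lex.cons hl
      · right
        rw [hveq, hveq']
        have : u.tail = u'.tail := by
          have := congrArg List.reverse hl
          simpa using this
        rw [this]
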